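/- Fix m > 0 and define h₁(σ) = x·exp(−(x − mσ)²/(2σ))/σ^{3/2} for σ > 0. For each x > 0, h₁ attains its maximum over (0,∞) at σ = s₁(x) = (√(4m²x² + 9) − 3)/(2m²), and x ↦ h₁(s₁(x)) is bounded on [a,∞) for every a > 0. -/

import Mathlib

open MeasureTheory Real

/-- `h₁(σ) = x exp(−(x−mσ)²/(2σ))/σ^{3/2}`. -/
noncomputable def h1 (m x σ : ℝ) : ℝ :=
  x * Real.exp (-(x - m * σ) ^ 2 / (2 * σ)) / Real.sqrt (σ ^ 3)

/-- `s₁(x) = (√(4m²x² + 9) − 3)/(2m²)`. -/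
noncomputable def s1 (m x : ℝ) : ℝ :=
  (Real.sqrt (4 * m ^ 2 * x ^ 2 + 9) - 3) / (2 * m ^ 2)

lemma sqrt_cube_eq (σ : ℝ) (hσ : 0 < σ) :
    Real.sqrt (σ ^ 3) = Real.exp (3 / 2 * Real.log σ) := by
  have h : (Real.exp (3 / 2 * Real.log σ)) ^ 2 = σ ^ 3 := by
    rw [← Real.exp_nat_mul,
      show ((2 : ℕ) : ℝ) * (3 / 2 * Real.log σ) = ((3 : ℕ) : ℝ) * Real.log σ by
        push_cast; ring,
      Real.exp_nat_mul, Real.exp_log hσ]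
  rw [← h, Real.sqrt_sq (Real.exp_pos _).le]

lemma h1_eq (m x σ : ℝ) (hσ : 0 < σ) :
    h1 m x σ = x * Real.exp (m * x - x ^ 2 / (2 * σ) - m ^ 2 * σ / 2
      - 3 / 2 * Real.log σ) := by
  unfold h1
  rw [sqrt_cube_eq σ hσ, mul_div_assoc, ← Real.exp_sub]
  congr 2
  field_simp
  ring

lemma s1_facts (m x : ℝ) (hm : 0 < m) (hx : 0 < x) :
    0 < s1 m x ∧ x ^ 2 = m ^ 2 * (s1 m x) ^ 2 + 3 * (s1 m x) := by
  have h9 : (0:ℝ) ≤ 4 * m ^ 2 * x ^ 2 + 9 := by positivity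
  set r := Real.sqrt (4 * m ^ 2 * x ^ 2 + 9) with hrdef
  have hr2 : r ^ 2 = 4 * m ^ 2 * x ^ 2 + 9 := Real.sq_sqrt h9
  have hr0 : 0 ≤ r := Real.sqrt_nonneg _
  have hmx : 0 < m * x := mul_pos hm hx
  have hr3 : 3 < r := by nlinarith [hr2, hr0, hmx]
  constructor
  · unfold s1
    rw [← hrdef]
    exact div_pos (by linarith) (by positivity)
  · unfold s1
    rw [← hrdef]
    field_simp
    nlinarith [hr2]

lemma h1_le_max (m x : ℝ) (hm : 0 < m) (hx : 0 < x) :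
    ∀ σ, 0 < σ → h1 m x σ ≤ h1 m x (s1 m x) := by
  obtain ⟨hs, hx2⟩ := s1_facts m x hm hx
  set s := s1 m x with hsdef
  intro σ hσ
  rw [h1_eq m x σ hσ, h1_eq m x s hs]
  apply mul_le_mul_of_nonneg_left _ hx.le
  apply Real.exp_le_exp.2
  have hlog : Real.log s - Real.log σ ≤ s / σ - 1 := by
    rw [← Real.log_div hs.ne' hσ.ne']
    exact Real.log_le_sub_one_of_pos (div_pos hs hσ)
  have hiden : x ^ 2 / (2 * σ) - x ^ 2 / (2 * s) + m ^ 2 * σ / 2 - m ^ 2 * s / 2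
      - 3 / 2 * (s / σ - 1) = m ^ 2 * (s - σ) ^ 2 / (2 * σ) := by
    rw [hx2]; field_simp; ring
  have h2 : 0 ≤ m ^ 2 * (s - σ) ^ 2 / (2 * σ) := by positivity
  nlinarith [hlog, hiden, h2]

/-- For `m > 0` and each `x > 0`, `h₁` attains its maximum over `(0,∞)` at
`σ = s₁(x)`, and `x ↦ h₁(s₁(x))` is bounded on `[a,∞)` for every `a > 0`. -/
theorem h1_max_and_bounded (m : ℝ) (hm : 0 < m) :
    (∀ x, 0 < x → 0 < s1 m x ∧ ∀ σ, 0 < σ → h1 m x σ ≤ h1 m x (s1 m x)) ∧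
      ∀ a, 0 < a → ∃ Cb : ℝ, ∀ x, a ≤ x → h1 m x (s1 m x) ≤ Cb := by
  constructor
  · exact fun x hx => ⟨(s1_facts m x hm hx).1, h1_le_max m x hm hx⟩
  · intro a ha
    refine ⟨Real.sqrt ((m * a + 3) ^ 3 / a ^ 4), fun x hax => ?_⟩
    have hx : 0 < x := lt_of_lt_of_le ha hax
    obtain ⟨hs, hx2⟩ := s1_facts m x hm hx
    set s := s1 m x with hsdef
    -- lower bound on s
    have h9 : (0:ℝ) ≤ 4 * m ^ 2 * x ^ 2 + 9 := by positivity
    have hr2 : Real.sqrt (4 * m ^ 2 * x ^ 2 + 9) ^ 2 = 4 * m ^ 2 * x ^ 2 + 9 :=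
      Real.sq_sqrt h9
    set r := Real.sqrt (4 * m ^ 2 * x ^ 2 + 9) with hrdef
    have hr0 : 0 ≤ r := Real.sqrt_nonneg _
    have hmx : 0 < m * x := mul_pos hm hx
    have hr3 : 3 ≤ r := by nlinarith [hr2, hr0, hmx]
    have hrle : r ≤ 2 * m * x + 3 := by nlinarith [hr2, hr0, hmx]
    have hma : 0 < m * a + 3 := by positivity
    have hslb : a * x / (m * a + 3) ≤ s := by
      have hseq : s = (r - 3) / (2 * m ^ 2) := by rw [hsdef]; rfl
      rw [hseq, div_le_div_iff₀ hma (by positivity)]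
      have hA : 0 ≤ (r - 3) * (2 * m * x + 3 - r) :=
        mul_nonneg (by linarith) (by linarith)
      nlinarith [hA, hr2, mul_nonneg (mul_nonneg (by linarith : (0:ℝ) ≤ r - 3)
        (by linarith : (0:ℝ) ≤ x - a)) (by norm_num : (0:ℝ) ≤ 3), hx, hax]
    have hsrt : 0 < Real.sqrt (s ^ 3) := Real.sqrt_pos.2 (by positivity)
    have hsq : x ^ 2 ≤ (m * a + 3) ^ 3 / a ^ 4 * s ^ 3 := by
      have h3 : (a * x / (m * a + 3)) ^ 3 ≤ s ^ 3 :=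
        pow_le_pow_left₀ (by positivity) hslb 3
      calc x ^ 2 ≤ x ^ 3 / a := by
            rw [le_div_iff₀ ha]; nlinarith
        _ = (m * a + 3) ^ 3 / a ^ 4 * (a * x / (m * a + 3)) ^ 3 := by
            field_simp
        _ ≤ (m * a + 3) ^ 3 / a ^ 4 * s ^ 3 := by gcongr
    calc h1 m x s = x * Real.exp (-(x - m * s) ^ 2 / (2 * s)) / Real.sqrt (s ^ 3) := rfl
      _ ≤ x * 1 / Real.sqrt (s ^ 3) := by
          gcongr
          exact Real.exp_le_one_iff.2 (div_nonpos_of_nonpos_of_nonneg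
            (neg_nonpos.2 (sq_nonneg _)) (by positivity))
      _ = x / Real.sqrt (s ^ 3) := by ring
      _ ≤ Real.sqrt ((m * a + 3) ^ 3 / a ^ 4) := by
          rw [div_le_iff₀ hsrt, ← Real.sqrt_mul (by positivity) (s ^ 3)]
          exact (Real.le_sqrt hx.le (by positivity)).2 hsq
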